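/- Let T = (T(n,k))_{n,k≥0} be the array with entries in ℤ[c,d,e] defined by T(0,k) = δ_{k0} and, for n ≥ 1, T(n,k) = c·T(n−1,k−1) + (dk+e)·T(n−1,k), with T(n,k) = 0 for k < 0. Then for all n,k ≥ 0, T(n,k) equals the sum, over all set partitions π of {1,2,…,n+1} into exactly k+1 nonempty blocks, of the product over i = 2,…,n+1 of the weight w_π(i), where w_π(i) = e if smallest(π,i) = 1, w_π(i) = c if smallest(π,i) = i, and w_π(i) = d if smallest(π,i) ∉ {1, i}. -/

import Mathlib

/- The polynomial ring ℤ[c,d,e]: variable 0 ↦ c, 1 ↦ d, 2 ↦ e. -/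
noncomputable def cVar : MvPolynomial (Fin 3) ℤ := MvPolynomial.X 0
noncomputable def dVar : MvPolynomial (Fin 3) ℤ := MvPolynomial.X 1
noncomputable def eVar : MvPolynomial (Fin 3) ℤ := MvPolynomial.X 2

/-- The array `T(n,k)` with entries in ℤ[c,d,e], defined by `T(0,k) = δ_{k0}` and
`T(n,k) = c·T(n−1,k−1) + (dk+e)·T(n−1,k)` for `n ≥ 1`.  The second index ranges
over ℤ, so the convention `T(n,k) = 0` for `k < 0` is automatic. -/
noncomputable def T : ℕ → ℤ → MvPolynomial (Fin 3) ℤ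
  | 0, k => if k = 0 then 1 else 0
  | n + 1, k =>
      cVar * T n (k - 1) + (dVar * ((k : ℤ) : MvPolynomial (Fin 3) ℤ) + eVar) * T n k

/-- `smallest π i`: the smallest element of the block of the set partition `π`
containing `i`.  Here the ground set `{1,…,n+1}` is modelled by `Fin (n+1)`
(so the element `1` corresponds to `0 : Fin (n+1)`). -/
noncomputable def smallest {n : ℕ} (π : Finpartition (Finset.univ : Finset (Fin (n + 1))))
    (i : Fin (n + 1)) : Fin (n + 1) :=
  (π.part i).min' ⟨i, π.mem_part (Finset.mem_univ i)⟩

/-- The weight `w_π(i)`: `e` if `smallest(π,i) = 1`, `c` if `smallest(π,i) = i`,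
and `d` otherwise. -/
noncomputable def weight {n : ℕ} (π : Finpartition (Finset.univ : Finset (Fin (n + 1))))
    (i : Fin (n + 1)) : MvPolynomial (Fin 3) ℤ :=
  if smallest π i = 0 then eVar else if smallest π i = i then cVar else dVar

open Finset

-- auxiliary development
def IsGood {n : ℕ} (f : Fin (n+1) → Fin (n+1)) : Prop :=
  (∀ i, f i ≤ i) ∧ (∀ i, f (f i) = f i)

instance {n : ℕ} : DecidablePred (@IsGood n) := fun f => by
  unfold IsGood; infer_instance

def fixf {n : ℕ} (f : Fin (n+1) → Fin (n+1)) : Finset (Fin (n+1)) :=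
  univ.filter (fun i => f i = i)

noncomputable def fwt {n : ℕ} (f : Fin (n+1) → Fin (n+1)) : MvPolynomial (Fin 3) ℤ :=
  ∏ i ∈ univ.filter (fun i : Fin (n+1) => i ≠ 0),
    (if f i = 0 then eVar else if f i = i then cVar else dVar)

noncomputable def Sf (n k : ℕ) : MvPolynomial (Fin 3) ℤ :=
  ∑ f ∈ univ.filter (fun f : Fin (n+1) → Fin (n+1) => IsGood f ∧ (fixf f).card = k+1), fwt f

lemma zero_mem_fixf {n : ℕ} {f : Fin (n+1) → Fin (n+1)} (hf : IsGood f) : (0 : Fin (n+1)) ∈ fixf f := by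
  simp only [fixf, mem_filter, mem_univ, true_and]
  exact le_antisymm (hf.1 0) (Fin.zero_le _)

lemma T_neg (n : ℕ) {k : ℤ} (hk : k < 0) : T n k = 0 := by
  induction n generalizing k with
  | zero => simp [T, hk.ne]
  | succ n ih => simp [T, ih hk, ih (by omega : k - 1 < 0)]

section Rec
variable {n : ℕ}

def extf (g : Fin (n+1) → Fin (n+1)) (v : Fin (n+2)) : Fin (n+2) → Fin (n+2) :=
  Fin.lastCases v (fun j => (g j).castSucc)

@[simp] lemma extf_castSucc (g : Fin (n+1) → Fin (n+1)) (v : Fin (n+2)) (j : Fin (n+1)) :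
    extf g v j.castSucc = (g j).castSucc := Fin.lastCases_castSucc ..

@[simp] lemma extf_last (g : Fin (n+1) → Fin (n+1)) (v : Fin (n+2)) :
    extf g v (Fin.last (n+1)) = v := Fin.lastCases_last ..

def resf (f : Fin (n+2) → Fin (n+2)) : Fin (n+1) → Fin (n+1) :=
  fun j => if h : f j.castSucc = Fin.last (n+1) then 0 else (f j.castSucc).castPred h

lemma resf_spec {f : Fin (n+2) → Fin (n+2)} (hf : ∀ i, f i ≤ i) (j : Fin (n+1)) :
    (resf f j).castSucc = f j.castSucc := by
  have h : f j.castSucc ≠ Fin.last (n+1) := by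
    intro h
    have := hf j.castSucc
    rw [h] at this
    exact absurd (lt_of_le_of_lt this (Fin.castSucc_lt_last j)) (lt_irrefl _)
  simp [resf, h]

lemma resf_extf (g : Fin (n+1) → Fin (n+1)) (v : Fin (n+2)) : resf (extf g v) = g := by
  funext j
  have h : (extf g v) j.castSucc ≠ Fin.last (n+1) := by
    rw [extf_castSucc]; exact (Fin.castSucc_lt_last _).ne
  simp only [resf, extf_castSucc, dif_neg (Fin.castSucc_lt_last (g j)).ne, Fin.castPred_castSucc]

lemma extf_resf {f : Fin (n+2) → Fin (n+2)} (hf : ∀ i, f i ≤ i) :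
    extf (resf f) (f (Fin.last (n+1))) = f := by
  funext i
  induction i using Fin.lastCases with
  | last => simp
  | cast j => rw [extf_castSucc, resf_spec hf]

lemma good_resf {f : Fin (n+2) → Fin (n+2)} (hf : IsGood f) : IsGood (resf f) := by
  constructor
  · intro j
    have := hf.1 j.castSucc
    rw [← resf_spec hf.1 j] at this
    exact_mod_cast this
  · intro j
    have := hf.2 j.castSucc
    rw [← resf_spec hf.1 j, ← resf_spec hf.1 (resf f j)] at this
    exact Fin.castSucc_injective _ this

lemma good_extf {g : Fin (n+1) → Fin (n+1)} (hg : IsGood g) {v : Fin (n+2)}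
    (hv : v = Fin.last (n+1) ∨ ∃ u, v = u.castSucc ∧ g u = u) : IsGood (extf g v) := by
  have hvv : extf g v v = v := by
    rcases hv with h | ⟨u, rfl, hu⟩
    · rw [h, extf_last]
    · rw [extf_castSucc, hu]
  constructor
  · intro i
    induction i using Fin.lastCases with
    | last => rw [extf_last]; exact Fin.le_last v
    | cast j => rw [extf_castSucc]; exact_mod_cast hg.1 j
  · intro i
    induction i using Fin.lastCases with
    | last => rw [extf_last]; exact hvv
    | cast j => rw [extf_castSucc, extf_castSucc, hg.2]

lemma card_fixf_extf (g : Fin (n+1) → Fin (n+1)) (v : Fin (n+2)) :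
    (fixf (extf g v)).card = (fixf g).card + (if v = Fin.last (n+1) then 1 else 0) := by
  simp only [fixf, card_filter]
  rw [Fin.sum_univ_castSucc]
  congr 1
  · apply Finset.sum_congr rfl
    intro j _
    rw [extf_castSucc]
    simp [Fin.castSucc_inj]
  · rw [extf_last]

noncomputable def wlast (v : Fin (n+2)) : MvPolynomial (Fin 3) ℤ :=
  if v = 0 then eVar else if v = Fin.last (n+1) then cVar else dVar

lemma fwt_extf (g : Fin (n+1) → Fin (n+1)) (v : Fin (n+2)) :
    fwt (extf g v) = fwt g * wlast v := by
  simp only [fwt, prod_filter]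
  rw [Fin.prod_univ_castSucc]
  congr 1
  · apply Finset.prod_congr rfl
    intro j _
    rw [extf_castSucc]
    simp [Fin.castSucc_inj, Fin.castSucc_eq_zero_iff]
  · have h1 : Fin.last (n+1) ≠ (0 : Fin (n+2)) := by
      simp [Fin.ext_iff]
    simp [h1, extf_last, wlast]

end Rec

section Rec2
variable {n : ℕ}

def vof (f : Fin (n+2) → Fin (n+2)) : Fin (n+1) :=
  if h : f (Fin.last (n+1)) = Fin.last (n+1) then 0 else (f (Fin.last (n+1))).castPred h

lemma vof_castSucc {f : Fin (n+2) → Fin (n+2)} (h : f (Fin.last (n+1)) ≠ Fin.last (n+1)) :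
    (vof f).castSucc = f (Fin.last (n+1)) := by
  simp [vof, dif_neg h]

lemma last_ne_zero : (Fin.last (n+1) : Fin (n+2)) ≠ 0 := by
  simp [Fin.ext_iff]

lemma wlast_last : wlast (Fin.last (n+1)) = cVar := by
  simp [wlast, last_ne_zero]

lemma Sf_rec (n k : ℕ) :
    Sf (n+1) k = cVar * (if k = 0 then 0 else Sf n (k-1))
      + (dVar * ((k : ℤ) : MvPolynomial (Fin 3) ℤ) + eVar) * Sf n k := by
  rw [Sf, ← Finset.sum_filter_add_sum_filter_not _
    (fun f => f (Fin.last (n+1)) = Fin.last (n+1))]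
  congr 1
  · -- the `f last = last` part
    rcases Nat.eq_zero_or_pos k with rfl | hk
    · rw [if_pos rfl, mul_zero]
      apply Finset.sum_eq_zero
      intro f hf
      exfalso
      simp only [Finset.mem_filter, Finset.mem_univ, true_and] at hf
      obtain ⟨⟨hg, hcard⟩, hlast⟩ := hf
      have h2 : 1 < (fixf f).card := by
        apply Finset.one_lt_card.mpr
        refine ⟨0, zero_mem_fixf hg, Fin.last (n+1), ?_, (Ne.symm last_ne_zero)⟩
        simp [fixf, hlast]
      omega
    · obtain ⟨m, rfl⟩ : ∃ m, k = m + 1 := ⟨k - 1, by omega⟩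
      rw [if_neg (by omega), show m+1-1 = m from rfl]
      have : cVar * Sf n m = ∑ g ∈ Finset.univ.filter
          (fun g : Fin (n+1) → Fin (n+1) => IsGood g ∧ (fixf g).card = m+1), cVar * fwt g := by
        rw [Sf, Finset.mul_sum]
      rw [this]
      apply Finset.sum_nbij' (i := resf) (j := fun g => extf g (Fin.last (n+1)))
      · intro f hf
        simp only [Finset.mem_filter, Finset.mem_univ, true_and] at hf ⊢
        obtain ⟨⟨hg, hcard⟩, hlast⟩ := hf
        have hf' : f = extf (resf f) (Fin.last (n+1)) := by
          conv_lhs => rw [← extf_resf hg.1]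
          rw [hlast]
        refine ⟨good_resf hg, ?_⟩
        rw [hf', card_fixf_extf, if_pos rfl] at hcard
        omega
      · intro g hg
        simp only [Finset.mem_filter, Finset.mem_univ, true_and] at hg ⊢
        refine ⟨⟨good_extf hg.1 (Or.inl rfl), ?_⟩, extf_last ..⟩
        rw [card_fixf_extf, if_pos rfl, hg.2]
      · intro f hf
        simp only [Finset.mem_filter, Finset.mem_univ, true_and] at hf
        conv_rhs => rw [← extf_resf hf.1.1.1]
        rw [hf.2]
      · intro g _
        exact resf_extf ..
      · intro f hf
        simp only [Finset.mem_filter, Finset.mem_univ, true_and] at hf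
        have hf' : f = extf (resf f) (Fin.last (n+1)) := by
          conv_lhs => rw [← extf_resf hf.1.1.1]
          rw [hf.2]
        rw [hf', fwt_extf, resf_extf, wlast_last, mul_comm]
  · -- the `f last ≠ last` part
    have key : ∀ g : Fin (n+1) → Fin (n+1), IsGood g → (fixf g).card = k + 1 →
        ∑ v ∈ fixf g, wlast v.castSucc
          = dVar * ((k : ℤ) : MvPolynomial (Fin 3) ℤ) + eVar := by
      intro g hg hcard
      rw [← Finset.add_sum_erase _ _ (zero_mem_fixf hg)]
      have h0 : wlast ((0 : Fin (n+1)).castSucc) = eVar := by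
        simp [wlast]
      rw [h0]
      have hrest : ∀ v ∈ (fixf g).erase 0, wlast v.castSucc = dVar := by
        intro v hv
        have hv0 : v ≠ 0 := Finset.ne_of_mem_erase hv
        have h1 : v.castSucc ≠ 0 := by
          simpa [Fin.castSucc_eq_zero_iff] using hv0
        have h2 : v.castSucc ≠ Fin.last (n+1) := (Fin.castSucc_lt_last v).ne
        simp [wlast, h1, h2]
      rw [Finset.sum_congr rfl hrest, Finset.sum_const,
        Finset.card_erase_of_mem (zero_mem_fixf hg), hcard]
      simp [nsmul_eq_mul, mul_comm]
      ring
    have : (dVar * ((k : ℤ) : MvPolynomial (Fin 3) ℤ) + eVar) * Sf n k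
        = ∑ p ∈ (Finset.univ.filter
            (fun g : Fin (n+1) → Fin (n+1) => IsGood g ∧ (fixf g).card = k+1)).sigma
            (fun g => fixf g), fwt p.1 * wlast p.2.castSucc := by
      rw [Finset.sum_sigma, Sf, Finset.mul_sum]
      apply Finset.sum_congr rfl
      intro g hg
      simp only [Finset.mem_filter, Finset.mem_univ, true_and] at hg
      dsimp only
      rw [← Finset.mul_sum, key g hg.1 hg.2, mul_comm]
    rw [this]
    apply Finset.sum_nbij' (i := fun f => (⟨resf f, vof f⟩ : Σ _ : Fin (n+1) → Fin (n+1), Fin (n+1)))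
      (j := fun p => extf p.1 p.2.castSucc)
    · intro f hf
      simp only [Finset.mem_filter, Finset.mem_univ, true_and] at hf
      obtain ⟨⟨hg, hcard⟩, hlast⟩ := hf
      have hf' : f = extf (resf f) ((vof f).castSucc) := by
        conv_lhs => rw [← extf_resf hg.1]
        rw [vof_castSucc hlast]
      rw [Finset.mem_sigma]
      constructor
      · simp only [Finset.mem_filter, Finset.mem_univ, true_and]
        refine ⟨good_resf hg, ?_⟩
        rw [hf', card_fixf_extf, if_neg (Fin.castSucc_lt_last _).ne] at hcard
        omega
      · simp only [fixf, Finset.mem_filter, Finset.mem_univ, true_and]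
        apply Fin.castSucc_injective
        rw [resf_spec hg.1, vof_castSucc hlast]
        exact hg.2 (Fin.last (n+1))
    · intro p hp
      rw [Finset.mem_sigma] at hp
      obtain ⟨hp1, hp2⟩ := hp
      simp only [Finset.mem_filter, Finset.mem_univ, true_and] at hp1 ⊢
      simp only [fixf, Finset.mem_filter, Finset.mem_univ, true_and] at hp2
      refine ⟨⟨good_extf hp1.1 (Or.inr ⟨p.2, rfl, hp2⟩), ?_⟩, ?_⟩
      · rw [card_fixf_extf, if_neg (Fin.castSucc_lt_last _).ne, hp1.2]
      · rw [extf_last]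
        exact (Fin.castSucc_lt_last _).ne
    · intro f hf
      simp only [Finset.mem_filter, Finset.mem_univ, true_and] at hf
      have : extf (resf f) ((vof f).castSucc) = f := by
        conv_rhs => rw [← extf_resf hf.1.1.1]
        rw [vof_castSucc hf.2]
      exact this
    · rintro ⟨g, v⟩ hp
      have h2 : vof (extf g v.castSucc) = v := by
        apply Fin.castSucc_injective
        rw [vof_castSucc (by rw [extf_last]; exact (Fin.castSucc_lt_last _).ne), extf_last]
      simp only [resf_extf, h2]
    · intro f hf
      simp only [Finset.mem_filter, Finset.mem_univ, true_and] at hf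
      have hf' : f = extf (resf f) ((vof f).castSucc) := by
        conv_lhs => rw [← extf_resf hf.1.1.1]
        rw [vof_castSucc hf.2]
      conv_lhs => rw [hf', fwt_extf]

end Rec2

lemma Sf_zero (k : ℕ) : Sf 0 k = if k = 0 then 1 else 0 := by
  have hfix : ∀ f : Fin 1 → Fin 1, fixf f = Finset.univ := by
    intro f; ext i; simp [fixf, Subsingleton.elim (f i) i]
  have hall : ∀ i j : Fin 1, i = j := fun i j => Fin.ext (by omega)
  have hwt : ∀ f : Fin 1 → Fin 1, fwt f = 1 := by
    intro f
    rw [fwt, show (Finset.univ.filter (fun i : Fin 1 => i ≠ 0)) = ∅ by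
      ext i; simp [hall i 0], Finset.prod_empty]
  rcases Nat.eq_zero_or_pos k with rfl | hk
  · rw [if_pos rfl, Sf]
    have hs : Finset.univ.filter
        (fun f : Fin 1 → Fin 1 => IsGood f ∧ (fixf f).card = 0 + 1) = Finset.univ := by
      ext f
      simp only [Finset.mem_filter, Finset.mem_univ, true_and, iff_true]
      exact ⟨⟨fun i => le_of_eq (hall _ _), fun i => hall _ _⟩, by rw [hfix]; simp⟩
    rw [hs, Finset.sum_congr rfl (fun f _ => hwt f), Finset.sum_const]
    simp
  · rw [if_neg (by omega), Sf]
    apply Finset.sum_eq_zero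
    intro f hf
    exfalso
    simp only [Finset.mem_filter, Finset.mem_univ, true_and, hfix] at hf
    have := hf.2
    simp at this
    omega

lemma T_eq_Sf (n k : ℕ) : T n (k : ℤ) = Sf n k := by
  induction n generalizing k with
  | zero =>
    rw [Sf_zero]
    rcases Nat.eq_zero_or_pos k with rfl | hk
    · simp [T]
    · rw [T, if_neg (by exact_mod_cast (by omega : k ≠ 0)), if_neg (by omega)]
  | succ n ih =>
    rw [T, Sf_rec]
    congr 1
    · congr 1
      rcases Nat.eq_zero_or_pos k with rfl | hk
      · rw [if_pos rfl]
        exact T_neg n (by norm_num)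
      · rw [if_neg (by omega), show ((k : ℤ) - 1) = ((k - 1 : ℕ) : ℤ) by omega, ih]
    · rw [ih]

section Part
variable {n : ℕ}

lemma smallest_mem (π : Finpartition (Finset.univ : Finset (Fin (n+1)))) (i : Fin (n+1)) :
    smallest π i ∈ π.part i := Finset.min'_mem _ _

lemma smallest_le (π : Finpartition (Finset.univ : Finset (Fin (n+1)))) (i : Fin (n+1)) :
    smallest π i ≤ i := Finset.min'_le _ _ (π.mem_part (Finset.mem_univ i))

lemma part_smallest (π : Finpartition (Finset.univ : Finset (Fin (n+1)))) (i : Fin (n+1)) :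
    π.part (smallest π i) = π.part i :=
  π.part_eq_of_mem (π.part_mem.2 (Finset.mem_univ i)) (smallest_mem π i)

lemma smallest_of_part_eq {π : Finpartition (Finset.univ : Finset (Fin (n+1)))}
    {i j : Fin (n+1)} (h : π.part i = π.part j) : smallest π i = smallest π j := by
  simp only [smallest, h]

lemma smallest_idem (π : Finpartition (Finset.univ : Finset (Fin (n+1)))) (i : Fin (n+1)) :
    smallest π (smallest π i) = smallest π i :=
  smallest_of_part_eq (part_smallest π i)

lemma good_smallest (π : Finpartition (Finset.univ : Finset (Fin (n+1)))) :
    IsGood (fun i => smallest π i) :=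
  ⟨smallest_le π, fun i => smallest_idem π i⟩

lemma part_eq_filter (π : Finpartition (Finset.univ : Finset (Fin (n+1)))) (i : Fin (n+1)) :
    π.part i = Finset.univ.filter (fun j => smallest π j = smallest π i) := by
  ext j
  simp only [Finset.mem_filter, Finset.mem_univ, true_and]
  constructor
  · intro hj
    exact smallest_of_part_eq (π.part_eq_of_mem (π.part_mem.2 (Finset.mem_univ i)) hj)
  · intro hj
    have h1 : smallest π j ∈ π.part j := smallest_mem π j
    have h2 : smallest π j ∈ π.part i := by rw [hj]; exact smallest_mem π i
    have := π.eq_of_mem_parts (π.part_mem.2 (Finset.mem_univ j))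
      (π.part_mem.2 (Finset.mem_univ i)) h1 h2
    rw [← this]
    exact π.mem_part (Finset.mem_univ j)

lemma parts_eq_image (π : Finpartition (Finset.univ : Finset (Fin (n+1)))) :
    π.parts = Finset.univ.image π.part := by
  ext t
  simp only [Finset.mem_image, Finset.mem_univ, true_and]
  constructor
  · intro ht
    obtain ⟨a, ha⟩ := π.nonempty_of_mem_parts ht
    exact ⟨a, π.part_eq_of_mem ht ha⟩
  · rintro ⟨a, rfl⟩
    exact π.part_mem.2 (Finset.mem_univ a)

lemma eq_of_smallest_eq {π π' : Finpartition (Finset.univ : Finset (Fin (n+1)))}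
    (h : ∀ i, smallest π i = smallest π' i) : π = π' := by
  ext1
  rw [parts_eq_image, parts_eq_image]
  apply Finset.image_congr
  intro i _
  rw [part_eq_filter, part_eq_filter π' i]
  simp only [h]

lemma card_parts_eq_card_fixf (π : Finpartition (Finset.univ : Finset (Fin (n+1)))) :
    π.parts.card = (fixf (fun i => smallest π i)).card := by
  symm
  apply Finset.card_bij (fun a _ => π.part a)
  · intro a _
    exact π.part_mem.2 (Finset.mem_univ a)
  · intro a ha b hb hab
    simp only [fixf, Finset.mem_filter, Finset.mem_univ, true_and] at ha hb
    rw [← ha, ← hb]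
    exact smallest_of_part_eq hab
  · intro t ht
    obtain ⟨a, ha⟩ := π.nonempty_of_mem_parts ht
    refine ⟨smallest π a, ?_, ?_⟩
    · simp only [fixf, Finset.mem_filter, Finset.mem_univ, true_and]
      exact smallest_idem π a
    · rw [part_smallest, π.part_eq_of_mem ht ha]

/-- The partition induced by a good function: blocks are the fibers of `f`. -/
instance kerDec (f : Fin (n+1) → Fin (n+1)) : DecidableRel ⇑(Setoid.ker f) :=
  fun a b => inferInstanceAs (Decidable (f a = f b))

noncomputable def pOf (f : Fin (n+1) → Fin (n+1)) :
    Finpartition (Finset.univ : Finset (Fin (n+1))) :=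
  Finpartition.ofSetoid (Setoid.ker f)

lemma mem_part_pOf (f : Fin (n+1) → Fin (n+1)) {i j : Fin (n+1)} :
    j ∈ (pOf f).part i ↔ f i = f j := by
  rw [pOf]
  exact (Finpartition.mem_part_ofSetoid_iff_rel).trans Setoid.ker_def

lemma smallest_pOf {f : Fin (n+1) → Fin (n+1)} (hf : IsGood f) (i : Fin (n+1)) :
    smallest (pOf f) i = f i := by
  apply le_antisymm
  · exact Finset.min'_le _ _ ((mem_part_pOf f).mpr (hf.2 i).symm)
  · apply Finset.le_min'
    intro j hj
    rw [mem_part_pOf f] at hj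
    calc f i = f j := hj
    _ ≤ j := hf.1 j

lemma Sf_eq_partition_sum (n k : ℕ) :
    Sf n k = ∑ π : {π : Finpartition (Finset.univ : Finset (Fin (n + 1))) //
            π.parts.card = k + 1},
          ∏ i ∈ Finset.univ.filter (fun i : Fin (n + 1) => i ≠ 0), weight π.1 i := by
  classical
  rw [← Finset.sum_subtype (Finset.univ.filter
      (fun π : Finpartition (Finset.univ : Finset (Fin (n+1))) => π.parts.card = k + 1))
      (by simp) (fun π => ∏ i ∈ Finset.univ.filter (fun i : Fin (n + 1) => i ≠ 0), weight π i)]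
  rw [Sf]
  apply Finset.sum_nbij' (i := fun f => pOf f) (j := fun π => (fun i => smallest π i))
  · intro f hf
    simp only [Finset.mem_filter, Finset.mem_univ, true_and] at hf ⊢
    rw [card_parts_eq_card_fixf]
    have : (fun i => smallest (pOf f) i) = f := funext (smallest_pOf hf.1)
    rw [this]
    exact hf.2
  · intro π hπ
    simp only [Finset.mem_filter, Finset.mem_univ, true_and] at hπ ⊢
    refine ⟨good_smallest π, ?_⟩
    rw [← card_parts_eq_card_fixf, hπ]
  · intro f hf
    simp only [Finset.mem_filter, Finset.mem_univ, true_and] at hf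
    exact funext (smallest_pOf hf.1)
  · intro π hπ
    apply eq_of_smallest_eq
    intro i
    exact smallest_pOf (good_smallest π) i
  · intro f hf
    simp only [Finset.mem_filter, Finset.mem_univ, true_and] at hf
    rw [fwt]
    apply Finset.prod_congr rfl
    intro i _
    rw [weight, smallest_pOf hf.1]

end Part


/-- `T(n,k)` is the sum, over all set partitions `π` of `{1,…,n+1}` into exactly
`k+1` nonempty blocks, of `∏_{i=2}^{n+1} w_π(i)`.  (The product over
`i = 2,…,n+1` is the product over the nonzero elements of `Fin (n+1)`.) -/
theorem T_eq_sum_over_partitions (n k : ℕ) :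
    T n (k : ℤ)
      = ∑ π : {π : Finpartition (Finset.univ : Finset (Fin (n + 1))) //
            π.parts.card = k + 1},
          ∏ i ∈ Finset.univ.filter (fun i : Fin (n + 1) => i ≠ 0), weight π.1 i := by
  rw [T_eq_Sf, Sf_eq_partition_sum]
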